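/- arXiv:2007.11934 — 4 statements merged into one kernel-verified Lean document; each statement's English description precedes it below -/
import Mathlib

section
/- Fix a finite dataset X = {x₁,…,x_n} ⊆ ℝ^d and a finite set B ⊆ ℝ^d such that for every x ∈ X there exists x_b ∈ B with ‖x − x_b‖₂ ≤ γ. Let 𝒟 be a finite set of L-Lipschitz functions D : ℝ^d → [0,1] that contains the constant function D^{1/2}(x) = 1/2. Define U(x, D) = (1/n)∑ᵢ D(xᵢ) + (1 − D(x)) and extend to distributions over B by expectation. Then there exists a distribution φ ∈ Δ(B) such that (φ, D^{1/2}) is an Lγ-approximate equilibrium of the game with payoff U; in particular the game value V satisfies 1 ≤ V ≤ 1 + Lγ. -/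
open Finset

/-- The post-GAN payoff of a mixed synthetic strategy `φ` (supported on `B`)
against a discriminator `D`, for a private dataset `X` of size `n`:
`U(φ, D) = Σ_{x ∈ B} φ(x) · ((1/n) Σ_i D(xᵢ) + (1 − D(x)))`. -/
noncomputable def postGANPayoff {d n : ℕ} (X : Fin n → EuclideanSpace ℝ (Fin d))
    (B : Finset (EuclideanSpace ℝ (Fin d)))
    (φ : EuclideanSpace ℝ (Fin d) → ℝ) (D : EuclideanSpace ℝ (Fin d) → ℝ) : ℝ :=
  ∑ x ∈ B, φ x * ((1 / (n : ℝ)) * ∑ i, D (X i) + (1 - D x))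

lemma payoffHalf {d n : ℕ} (hn : 0 < n) (X : Fin n → EuclideanSpace ℝ (Fin d))
    (B : Finset (EuclideanSpace ℝ (Fin d))) (φ : EuclideanSpace ℝ (Fin d) → ℝ)
    (hsum : ∑ x ∈ B, φ x = 1) :
    postGANPayoff X B φ (fun _ => (1/2 : ℝ)) = 1 := by
  have hn' : (n : ℝ) ≠ 0 := Nat.cast_ne_zero.mpr hn.ne'
  unfold postGANPayoff
  simp only [Finset.sum_const, Finset.card_univ, Fintype.card_fin, nsmul_eq_mul]
  have : (1 / (n : ℝ)) * ((n : ℝ) * (1/2)) + (1 - 1/2) = 1 := by field_simp; norm_num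
  rw [this]
  simpa using hsum

lemma payoffExpand {d n : ℕ} (X : Fin n → EuclideanSpace ℝ (Fin d))
    (B : Finset (EuclideanSpace ℝ (Fin d))) (φ D : EuclideanSpace ℝ (Fin d) → ℝ)
    (hsum : ∑ x ∈ B, φ x = 1) :
    postGANPayoff X B φ D
      = (1 / (n : ℝ)) * ∑ i, D (X i) + 1 - ∑ x ∈ B, φ x * D x := by
  unfold postGANPayoff
  rw [Finset.sum_congr rfl (fun x _ => mul_add (φ x) _ _),
    Finset.sum_add_distrib, ← Finset.sum_mul, hsum]
  rw [Finset.sum_congr rfl (fun x _ => mul_sub (φ x) 1 (D x)),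
    Finset.sum_sub_distrib]
  simp [hsum]; ring

/-- under γ-coverage of the dataset by `B`, and with `𝒟` a finite
set of L-Lipschitz discriminators containing the constant-1/2 discriminator,
there is a distribution `φ ∈ Δ(B)` such that `(φ, D^{1/2})` is an
`Lγ`-approximate equilibrium; in particular `1 ≤ V ≤ 1 + Lγ`. -/
theorem post_GAN_game_coverage
    {d n : ℕ} (hn : 0 < n) (X : Fin n → EuclideanSpace ℝ (Fin d))
    (B : Finset (EuclideanSpace ℝ (Fin d)))
    (𝒟 : Finset (EuclideanSpace ℝ (Fin d) → ℝ))
    (L γ : ℝ) (hL : 0 ≤ L) (hγ : 0 ≤ γ)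
    (hLip : ∀ D ∈ 𝒟, LipschitzWith (Real.toNNReal L) D)
    (hrange : ∀ D ∈ 𝒟, ∀ x, D x ∈ Set.Icc (0 : ℝ) 1)
    (hhalf : (fun _ => (1 / 2 : ℝ)) ∈ 𝒟)
    (hcover : ∀ i : Fin n, ∃ xb ∈ B, ‖X i - xb‖ ≤ γ) :
    ∃ φ : EuclideanSpace ℝ (Fin d) → ℝ,
      (∀ x, 0 ≤ φ x) ∧ (∀ x ∉ B, φ x = 0) ∧ (∑ x ∈ B, φ x = 1) ∧
      -- (φ, D^{1/2}) is an Lγ-approximate equilibrium: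
      (∀ D ∈ 𝒟, postGANPayoff X B φ D
          ≤ postGANPayoff X B φ (fun _ => (1 / 2 : ℝ)) + L * γ) ∧
      (∀ φ' : EuclideanSpace ℝ (Fin d) → ℝ, (∀ x, 0 ≤ φ' x) →
          (∀ x ∉ B, φ' x = 0) → (∑ x ∈ B, φ' x = 1) →
          postGANPayoff X B φ (fun _ => (1 / 2 : ℝ)) - L * γ
            ≤ postGANPayoff X B φ' (fun _ => (1 / 2 : ℝ))) ∧
      -- lower bound on the game value: every mixed strategy is distinguished
      -- with payoff at least 1 by some discriminator in 𝒟: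
      (∀ φ' : EuclideanSpace ℝ (Fin d) → ℝ, (∀ x, 0 ≤ φ' x) →
          (∀ x ∉ B, φ' x = 0) → (∑ x ∈ B, φ' x = 1) →
          ∃ D ∈ 𝒟, 1 ≤ postGANPayoff X B φ' D) ∧
      -- upper bound on the game value, witnessed by φ itself:
      (∀ D ∈ 𝒟, postGANPayoff X B φ D ≤ 1 + L * γ) := by
  classical
  have hn' : (n : ℝ) ≠ 0 := Nat.cast_ne_zero.mpr hn.ne'
  choose c hcB hcγ using hcover
  set φ : EuclideanSpace ℝ (Fin d) → ℝ :=
    fun x => (1 / (n : ℝ)) * ((Finset.univ.filter (fun i => c i = x)).card : ℝ) with hφ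
  have hpos : ∀ x, 0 ≤ φ x := fun x => by positivity
  have hout : ∀ x ∉ B, φ x = 0 := by
    intro x hx
    have : Finset.univ.filter (fun i => c i = x) = ∅ := by
      apply Finset.filter_false_of_mem
      intro i _ h
      exact hx (h ▸ hcB i)
    simp [hφ, this]
  have hsum : ∑ x ∈ B, φ x = 1 := by
    have key : ∑ x ∈ B, ((Finset.univ.filter (fun i => c i = x)).card : ℝ) = (n : ℝ) := by
      have := Finset.sum_fiberwise_of_maps_to (s := Finset.univ) (t := B) (g := c) (f := fun _ => (1 : ℝ))
        (fun i _ => hcB i)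
      simpa [Finset.sum_const] using this
    rw [hφ]
    simp only [← Finset.mul_sum]
    rw [key]; field_simp
  have hdot : ∀ D : EuclideanSpace ℝ (Fin d) → ℝ,
      ∑ x ∈ B, φ x * D x = (1 / (n : ℝ)) * ∑ i, D (c i) := by
    intro D
    have key : ∑ x ∈ B, ((Finset.univ.filter (fun i => c i = x)).card : ℝ) * D x
        = ∑ i, D (c i) := by
      have := Finset.sum_fiberwise_of_maps_to (s := Finset.univ) (t := B) (g := c) (f := fun i => D (c i))
        (fun i _ => hcB i)
      rw [← this]
      refine Finset.sum_congr rfl fun x hx => ?_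
      rw [Finset.sum_congr rfl (fun i hi => by
        rw [(Finset.mem_filter.mp hi).2])]
      simp [Finset.sum_const, mul_comm]
    rw [hφ]
    simp only [mul_assoc, ← Finset.mul_sum]
    rw [key]
  have hupper : ∀ D ∈ 𝒟, postGANPayoff X B φ D ≤ 1 + L * γ := by
    intro D hD
    rw [payoffExpand X B φ D hsum, hdot D]
    have hbound : ∑ i, (D (X i) - D (c i)) ≤ (n : ℝ) * (L * γ) := by
      calc ∑ i, (D (X i) - D (c i)) ≤ ∑ _i : Fin n, L * γ := by
            apply Finset.sum_le_sum
            intro i _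
            have h1 := (hLip D hD).dist_le_mul (X i) (c i)
            have h2 : dist (D (X i)) (D (c i)) ≤ L * γ := by
              have : (Real.toNNReal L : ℝ) = L := Real.coe_toNNReal L hL
              rw [this] at h1
              calc dist (D (X i)) (D (c i)) ≤ L * dist (X i) (c i) := h1
                _ ≤ L * γ := by
                    apply mul_le_mul_of_nonneg_left _ hL
                    rw [dist_eq_norm]; exact hcγ i
            calc D (X i) - D (c i) ≤ |D (X i) - D (c i)| := le_abs_self _
              _ = dist (D (X i)) (D (c i)) := (Real.dist_eq _ _).symm
              _ ≤ L * γ := h2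
        _ = (n : ℝ) * (L * γ) := by simp [Finset.sum_const, mul_comm]
    have : (1 / (n : ℝ)) * ∑ i, (D (X i) - D (c i)) ≤ L * γ := by
      calc (1 / (n : ℝ)) * ∑ i, (D (X i) - D (c i))
          ≤ (1 / (n : ℝ)) * ((n : ℝ) * (L * γ)) := by
            apply mul_le_mul_of_nonneg_left hbound
            positivity
        _ = L * γ := by field_simp
    rw [Finset.sum_sub_distrib, mul_sub] at this
    linarith
  refine ⟨φ, hpos, hout, hsum, ?_, ?_, ?_, hupper⟩
  · intro D hD
    rw [payoffHalf hn X B φ hsum]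
    exact hupper D hD
  · intro φ' h1 h2 h3
    rw [payoffHalf hn X B φ hsum, payoffHalf hn X B φ' h3]
    nlinarith
  · intro φ' h1 h2 h3
    exact ⟨_, hhalf, le_of_eq (payoffHalf hn X B φ' h3).symm⟩
end

section
/- (Multiplicative weights regret bound) Let B be a finite set and for t = 1,…,T let ℓ_t : B → [0,1] be loss functions. Define the multiplicative weights iterates φ^1 uniform on B and φ^{t+1}(b) ∝ φ^t(b)·exp(−η ℓ_t(b)) for learning rate η ∈ (0, 1/2]. Then ∑_{t=1}^T E_{b∼φ^t}[ℓ_t(b)] − min_{b∈B} ∑_{t=1}^T ℓ_t(b) ≤ η T + (log |B|)/η. -/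
open Finset

/-- `e^{-x} ≤ 1 - x + x²` for `0 ≤ x ≤ 1`. -/
lemma mw_exp_upper {x : ℝ} (hx0 : 0 ≤ x) (hx1 : x ≤ 1) :
    Real.exp (-x) ≤ 1 - x + x ^ 2 := by
  have habs : |(-x)| ≤ 1 := by rw [abs_neg, abs_of_nonneg hx0]; exact hx1
  have h := Real.exp_bound habs (n := 2) (by norm_num)
  have hsum : ∑ m ∈ Finset.range 2, (-x) ^ m / m.factorial = 1 - x := by
    simp [Finset.sum_range_succ, sub_eq_add_neg]
  rw [hsum] at h
  have h2 : Real.exp (-x) - (1 - x) ≤ |(-x)| ^ 2 * (3 / (2 * 2)) := by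
    have := (abs_sub_le_iff.1 h).1
    simpa using this
  have h3 : |(-x)| ^ 2 * (3 / (2 * 2)) ≤ x ^ 2 := by
    rw [abs_neg, abs_of_nonneg hx0]
    nlinarith [sq_nonneg x]
  linarith

/-- Multiplicative weights regret bound: for losses `ℓ_t : B → [0,1]`
and the exponential-weights iterates `φ^1` uniform,
`φ^{t+1}(b) ∝ φ^t(b) exp(−η ℓ_t(b))` with `η ∈ (0, 1/2]`, we have
`Σ_t E_{b∼φ^t}[ℓ_t(b)] − min_b Σ_t ℓ_t(b) ≤ ηT + log|B|/η`. -/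
theorem multiplicative_weights_regret
    {B : Type*} [Fintype B] [Nonempty B] (T : ℕ) (ℓ : Fin T → B → ℝ)
    (hℓ : ∀ t b, ℓ t b ∈ Set.Icc (0 : ℝ) 1)
    (η : ℝ) (hη0 : 0 < η) (hη : η ≤ 1 / 2)
    (φ : ℕ → B → ℝ)
    (h0 : ∀ b, φ 0 b = 1 / (Fintype.card B : ℝ))
    (hrec : ∀ t : Fin T, ∀ b, φ (t + 1) b =
        φ t b * Real.exp (-η * ℓ t b) /
          ∑ b', φ t b' * Real.exp (-η * ℓ t b')) :
    (∑ t : Fin T, ∑ b, φ t b * ℓ t b) -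
        Finset.univ.inf' Finset.univ_nonempty (fun b => ∑ t : Fin T, ℓ t b)
      ≤ η * T + Real.log (Fintype.card B) / η := by
  classical
  have hcard : (0 : ℝ) < (Fintype.card B : ℝ) := by
    exact_mod_cast Fintype.card_pos
  -- extend losses to ℕ
  set L : ℕ → B → ℝ := fun s b => if h : s < T then ℓ ⟨s, h⟩ b else 0 with hLdef
  set Z : ℕ → ℝ := fun s => ∑ b, φ s b * Real.exp (-η * L s b) with hZdef
  have hLval : ∀ (s : ℕ) (h : s < T) (b : B), L s b = ℓ ⟨s, h⟩ b := by
    intro s h b; simp [hLdef, h]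
  have hL01 : ∀ s, s < T → ∀ b, 0 ≤ L s b ∧ L s b ≤ 1 := by
    intro s hs b
    rw [hLval s hs b]
    exact ⟨(hℓ _ b).1, (hℓ _ b).2⟩
  have hrec' : ∀ s, s < T → ∀ b, φ (s + 1) b =
      φ s b * Real.exp (-η * L s b) / Z s := by
    intro s h b
    have h1 := hrec ⟨s, h⟩ b
    have h2 : ∀ b', φ s b' * Real.exp (-η * ℓ ⟨s, h⟩ b')
        = φ s b' * Real.exp (-η * L s b') := by
      intro b'; rw [hLval s h b']
    simp only [hZdef]
    rw [← h2 b, ← Finset.sum_congr rfl fun b' _ => h2 b']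
    simpa using h1
  -- positivity of φ
  have hpos : ∀ s, s ≤ T → ∀ b, 0 < φ s b := by
    intro s
    induction s with
    | zero => intro _ b; rw [h0]; positivity
    | succ n ih =>
      intro hn b
      have hnT : n < T := hn
      have hZpos : 0 < Z n :=
        Finset.sum_pos (fun b' _ => mul_pos (ih hnT.le b') (Real.exp_pos _))
          Finset.univ_nonempty
      rw [hrec' n hnT b]
      exact div_pos (mul_pos (ih hnT.le b) (Real.exp_pos _)) hZpos
  have hZpos : ∀ s, s < T → 0 < Z s := fun s hs =>
    Finset.sum_pos (fun b' _ => mul_pos (hpos s hs.le b') (Real.exp_pos _))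
      Finset.univ_nonempty
  -- sums are 1
  have hsum1 : ∀ s, s ≤ T → ∑ b, φ s b = 1 := by
    intro s
    induction s with
    | zero =>
      intro _
      simp only [h0]
      rw [Finset.sum_const, Finset.card_univ, nsmul_eq_mul]
      field_simp
    | succ n _ =>
      intro hn
      have hnT : n < T := hn
      have hz := hZpos n hnT
      calc ∑ b, φ (n + 1) b
          = ∑ b, φ n b * Real.exp (-η * L n b) / Z n :=
            Finset.sum_congr rfl fun b _ => hrec' n hnT b
        _ = (∑ b, φ n b * Real.exp (-η * L n b)) / Z n := by
            rw [Finset.sum_div]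
        _ = 1 := div_self (ne_of_gt hz)
  -- product formula
  have hprod : ∀ s, s ≤ T → ∀ b,
      φ s b * ∏ u ∈ Finset.range s, Z u =
        φ 0 b * Real.exp (-η * ∑ u ∈ Finset.range s, L u b) := by
    intro s
    induction s with
    | zero => intro _ b; simp
    | succ n ih =>
      intro hn b
      have hnT : n < T := hn
      have hz := hZpos n hnT
      rw [Finset.prod_range_succ, Finset.sum_range_succ]
      calc φ (n + 1) b * ((∏ u ∈ Finset.range n, Z u) * Z n)
          = (φ n b * ∏ u ∈ Finset.range n, Z u) * Real.exp (-η * L n b) := by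
            rw [hrec' n hnT b]; field_simp
        _ = φ 0 b * Real.exp (-η * ∑ u ∈ Finset.range n, L u b) *
              Real.exp (-η * L n b) := by rw [ih hnT.le b]
        _ = φ 0 b * Real.exp (-η * (∑ u ∈ Finset.range n, L u b + L n b)) := by
            rw [mul_assoc, ← Real.exp_add]; congr 1; ring
  -- expected losses
  set E : ℕ → ℝ := fun s => ∑ b, φ s b * L s b with hEdef
  have hE0 : ∀ s, s < T → 0 ≤ E s := fun s hs =>
    Finset.sum_nonneg fun b _ =>
      mul_nonneg (hpos s hs.le b).le (hL01 s hs b).1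
  have hE1 : ∀ s, s < T → E s ≤ 1 := by
    intro s hs
    calc E s ≤ ∑ b, φ s b := Finset.sum_le_sum fun b _ => by
          nlinarith [(hpos s hs.le b), (hL01 s hs b).2, (hL01 s hs b).1]
      _ = 1 := hsum1 s hs.le
  -- key bound on Z
  have hZle : ∀ s, s < T → Z s ≤ Real.exp (-η * E s + η ^ 2) := by
    intro s hs
    have step1 : Z s ≤ ∑ b, φ s b * (1 - η * L s b + η ^ 2 * L s b) := by
      apply Finset.sum_le_sum
      intro b _
      have hx0 : 0 ≤ η * L s b := mul_nonneg hη0.le (hL01 s hs b).1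
      have hx1 : η * L s b ≤ 1 := by
        nlinarith [(hL01 s hs b).2, (hL01 s hs b).1]
      have := mw_exp_upper hx0 hx1
      have hL2 : L s b ^ 2 ≤ L s b := by
        nlinarith [(hL01 s hs b).1, (hL01 s hs b).2]
      have hsq : (η * L s b) ^ 2 ≤ η ^ 2 * L s b := by
        rw [mul_pow]
        exact mul_le_mul_of_nonneg_left hL2 (sq_nonneg η)
      have hφ := (hpos s hs.le b).le
      calc φ s b * Real.exp (-η * L s b)
          = φ s b * Real.exp (-(η * L s b)) := by ring_nf
        _ ≤ φ s b * (1 - η * L s b + (η * L s b) ^ 2) :=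
            mul_le_mul_of_nonneg_left this hφ
        _ ≤ φ s b * (1 - η * L s b + η ^ 2 * L s b) := by nlinarith
    have step2 : ∑ b, φ s b * (1 - η * L s b + η ^ 2 * L s b)
        = 1 - (η - η ^ 2) * E s := by
      have : ∀ b, φ s b * (1 - η * L s b + η ^ 2 * L s b)
          = φ s b - (η - η ^ 2) * (φ s b * L s b) := by intro b; ring
      rw [Finset.sum_congr rfl fun b _ => this b, Finset.sum_sub_distrib,
        ← Finset.mul_sum, hsum1 s hs.le]
    have step3 : 1 - (η - η ^ 2) * E s ≤ Real.exp (-(η - η ^ 2) * E s) := by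
      have := Real.add_one_le_exp (-(η - η ^ 2) * E s)
      linarith
    have step4 : Real.exp (-(η - η ^ 2) * E s) ≤ Real.exp (-η * E s + η ^ 2) := by
      apply Real.exp_le_exp.2
      nlinarith [hE0 s hs, hE1 s hs, sq_nonneg η]
    calc Z s ≤ 1 - (η - η ^ 2) * E s := step2 ▸ step1
      _ ≤ _ := step3.trans step4
  -- the minimizer
  obtain ⟨bstar, _, hbstar⟩ :=
    Finset.exists_mem_eq_inf' (Finset.univ_nonempty (α := B))
      (fun b => ∑ t : Fin T, ℓ t b)
  set Lstar : ℝ := ∑ t : Fin T, ℓ t bstar with hLstar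
  have hsumL : ∑ u ∈ Finset.range T, L u bstar = Lstar := by
    rw [hLstar, ← Fin.sum_univ_eq_sum_range (fun i => L i bstar) T]
    apply Finset.sum_congr rfl
    intro i _
    rw [hLval i i.isLt bstar]
  have hPpos : 0 < ∏ u ∈ Finset.range T, Z u :=
    Finset.prod_pos fun u hu => hZpos u (Finset.mem_range.1 hu)
  have hφT1 : φ T bstar ≤ 1 := by
    rw [← hsum1 T le_rfl]
    exact Finset.single_le_sum (fun b _ => (hpos T le_rfl b).le)
      (Finset.mem_univ bstar)
  have hmain := hprod T le_rfl bstar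
  rw [hsumL, h0 bstar] at hmain
  have hlow : 1 / (Fintype.card B : ℝ) * Real.exp (-η * Lstar)
      ≤ ∏ u ∈ Finset.range T, Z u := by
    calc 1 / (Fintype.card B : ℝ) * Real.exp (-η * Lstar)
        = φ T bstar * ∏ u ∈ Finset.range T, Z u := hmain.symm
      _ ≤ 1 * ∏ u ∈ Finset.range T, Z u :=
          mul_le_mul_of_nonneg_right hφT1 hPpos.le
      _ = _ := one_mul _
  have hup : ∏ u ∈ Finset.range T, Z u
      ≤ Real.exp ((∑ u ∈ Finset.range T, -η * E u) + η ^ 2 * T) := by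
    calc ∏ u ∈ Finset.range T, Z u
        ≤ ∏ u ∈ Finset.range T, Real.exp (-η * E u + η ^ 2) :=
          Finset.prod_le_prod (fun u hu => (hZpos u (Finset.mem_range.1 hu)).le)
            (fun u hu => hZle u (Finset.mem_range.1 hu))
      _ = Real.exp (∑ u ∈ Finset.range T, (-η * E u + η ^ 2)) :=
          (Real.exp_sum _ _).symm
      _ = _ := by
          congr 1
          rw [Finset.sum_add_distrib, Finset.sum_const, Finset.card_range,
            nsmul_eq_mul]
          ring
  -- take logs
  have hchain := hlow.trans hup
  have hLpos : 0 < 1 / (Fintype.card B : ℝ) * Real.exp (-η * Lstar) := by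
    positivity
  have hlog := Real.log_le_log hLpos hchain
  rw [Real.log_mul (by positivity) (Real.exp_pos _).ne', Real.log_exp,
    Real.log_exp, Real.log_div one_ne_zero hcard.ne', Real.log_one] at hlog
  set SE : ℝ := ∑ u ∈ Finset.range T, E u with hSE
  have hsumE : ∑ u ∈ Finset.range T, -η * E u = -η * SE := by
    rw [hSE, Finset.mul_sum]
  rw [hsumE] at hlog
  -- final arithmetic
  have hgoalE : (∑ t : Fin T, ∑ b, φ t b * ℓ t b) = SE := by
    rw [hSE, ← Fin.sum_univ_eq_sum_range (fun i => E i) T]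
    apply Finset.sum_congr rfl
    intro t _
    apply Finset.sum_congr rfl
    intro b _
    rw [hLval t t.isLt b]
  rw [hgoalE, hbstar]
  have hdiv : η * (SE - Lstar) ≤ η * (η * T + Real.log (Fintype.card B) / η) := by
    rw [mul_add, mul_div_cancel₀ _ hη0.ne']
    nlinarith [hlog]
  exact le_of_mul_le_mul_left hdiv hη0
end

section
/- (Exponential mechanism privacy) Let q : X^n × R → ℝ be a quality score over a finite range R with sensitivity Δ(q) = max_{r∈R} max_{X∼X'} |q(X, r) − q(X', r)|. The exponential mechanism, which on input X outputs r ∈ R with probability proportional to exp(ε · q(X, r) / (2Δ(q))), is (ε, 0)-differentially private. -/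
open Finset

/-- Two datasets in `𝒳^n` are adjacent if they differ in at most one record. -/
def Adjacent {𝒳 : Type*} {n : ℕ} (X X' : Fin n → 𝒳) : Prop :=
  ∃ i : Fin n, ∀ j : Fin n, j ≠ i → X j = X' j

/-- Exponential mechanism privacy: for a quality score `q` over a
finite range `R` with sensitivity at most `Δ`, the mechanism outputting `r` with
probability proportional to `exp(ε q(X, r) / (2Δ))` is `(ε, 0)`-DP: the output
probabilities on adjacent datasets differ by a factor of at most `e^ε`. -/
theorem exponential_mechanism_privacy
    {𝒳 : Type*} {n : ℕ} {R : Type*} [Fintype R] [Nonempty R]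
    (q : (Fin n → 𝒳) → R → ℝ) (Δ ε : ℝ) (hΔ : 0 < Δ) (hε : 0 ≤ ε)
    (hsens : ∀ r : R, ∀ X X' : Fin n → 𝒳, Adjacent X X' →
        |q X r - q X' r| ≤ Δ) :
    ∀ X X' : Fin n → 𝒳, Adjacent X X' → ∀ r : R,
      Real.exp (ε * q X r / (2 * Δ)) / (∑ r', Real.exp (ε * q X r' / (2 * Δ)))
        ≤ Real.exp ε *
          (Real.exp (ε * q X' r / (2 * Δ)) /
            (∑ r', Real.exp (ε * q X' r' / (2 * Δ)))) := by
  intro X X' hadj r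
  set S : ℝ := ∑ r', Real.exp (ε * q X r' / (2 * Δ)) with hS
  set S' : ℝ := ∑ r', Real.exp (ε * q X' r' / (2 * Δ)) with hS'
  have hSpos : 0 < S := Finset.sum_pos (fun _ _ => Real.exp_pos _) univ_nonempty
  have hS'pos : 0 < S' := Finset.sum_pos (fun _ _ => Real.exp_pos _) univ_nonempty
  -- pointwise bound: exp(ε q X s /(2Δ)) ≤ exp(ε/2) * exp(ε q X' s /(2Δ))
  have key : ∀ (Y Y' : Fin n → 𝒳), Adjacent Y Y' → ∀ s : R,
      Real.exp (ε * q Y s / (2 * Δ)) ≤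
        Real.exp (ε / 2) * Real.exp (ε * q Y' s / (2 * Δ)) := by
    intro Y Y' h s
    rw [← Real.exp_add]
    apply Real.exp_le_exp.2
    have hq : q Y s - q Y' s ≤ Δ := (abs_le.1 (hsens s Y Y' h)).2
    have h2Δ : (0:ℝ) < 2 * Δ := by linarith
    rw [← sub_le_iff_le_add, div_sub_div_same, div_le_div_iff₀ h2Δ (by norm_num : (0:ℝ) < 2)]
    rw [← mul_sub]
    nlinarith [mul_le_mul_of_nonneg_left hq hε]
  have hadj' : Adjacent X' X := by
    obtain ⟨i, hi⟩ := hadj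
    exact ⟨i, fun j hj => (hi j hj).symm⟩
  have hnum : Real.exp (ε * q X r / (2 * Δ)) ≤
      Real.exp (ε / 2) * Real.exp (ε * q X' r / (2 * Δ)) := key X X' hadj r
  have hden : S' ≤ Real.exp (ε / 2) * S := by
    rw [hS, hS', mul_sum]
    exact Finset.sum_le_sum fun s _ => key X' X hadj' s
  have h1 : Real.exp (ε * q X r / (2 * Δ)) / S ≤
      Real.exp (ε / 2) * Real.exp (ε * q X' r / (2 * Δ)) / S := by
    gcongr
  refine h1.trans ?_
  rw [← mul_div_assoc, div_le_div_iff₀ hSpos hS'pos]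
  have hEp : (0:ℝ) ≤ Real.exp (ε / 2) * Real.exp (ε * q X' r / (2 * Δ)) := by positivity
  calc Real.exp (ε / 2) * Real.exp (ε * q X' r / (2 * Δ)) * S'
      ≤ Real.exp (ε / 2) * Real.exp (ε * q X' r / (2 * Δ)) * (Real.exp (ε / 2) * S) :=
        mul_le_mul_of_nonneg_left hden hEp
    _ = Real.exp ε * Real.exp (ε * q X' r / (2 * Δ)) * S := by
        rw [show Real.exp ε = Real.exp (ε / 2) * Real.exp (ε / 2) by
          rw [← Real.exp_add]; norm_num]
        ring
end

section
/- (Exponential mechanism utility) Let q : X^n × R → ℝ be a quality score over a finite range R of size N with sensitivity Δ. For a fixed dataset X, let OPT = max_{r∈R} q(X, r). If r is sampled with probability proportional to exp(ε q(X, r)/(2Δ)), then for any β ∈ (0,1), with probability at least 1 − β, q(X, r) ≥ OPT − (2Δ/ε)·log(N/β). -/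
open Finset

/-- Exponential mechanism utility: over a finite range `R` of size
`N`, if `r` is sampled with probability proportional to `exp(ε q(r)/(2Δ))`, then
the probability that `q(r) < OPT − (2Δ/ε) log(N/β)` is at most `β`. -/
theorem exponential_mechanism_utility
    {R : Type*} [Fintype R] [Nonempty R]
    (q : R → ℝ) (Δ ε β : ℝ) (hΔ : 0 < Δ) (hε : 0 < ε)
    (hβ : β ∈ Set.Ioo (0 : ℝ) 1)
    (N : ℕ) (hN : N = Fintype.card R)
    (OPT : ℝ) (hOPT : OPT = Finset.univ.sup' Finset.univ_nonempty q) :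
    ∑ r ∈ Finset.univ.filter
        (fun r => q r < OPT - (2 * Δ / ε) * Real.log (N / β)),
      Real.exp (ε * q r / (2 * Δ)) / (∑ r', Real.exp (ε * q r' / (2 * Δ)))
      ≤ β := by
  obtain ⟨hβ0, hβ1⟩ := hβ
  have hNpos : (0:ℝ) < N := by
    rw [hN]; exact_mod_cast Fintype.card_pos
  have h2Δ : (0:ℝ) < 2 * Δ := by linarith
  have hZpos : 0 < ∑ r', Real.exp (ε * q r' / (2 * Δ)) :=
    Finset.sum_pos (fun r _ => Real.exp_pos _) Finset.univ_nonempty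
  rw [← Finset.sum_div, div_le_iff₀ hZpos]
  have hOPTle : Real.exp (ε * OPT / (2 * Δ)) ≤ ∑ r', Real.exp (ε * q r' / (2 * Δ)) := by
    obtain ⟨r0, -, hr0⟩ := Finset.exists_mem_eq_sup' Finset.univ_nonempty q
    calc Real.exp (ε * OPT / (2 * Δ)) = Real.exp (ε * q r0 / (2 * Δ)) := by rw [hOPT, hr0]
      _ ≤ _ := Finset.single_le_sum (f := fun r => Real.exp (ε * q r / (2 * Δ)))
          (fun r _ => (Real.exp_pos _).le) (Finset.mem_univ r0)
  have key : ∀ r ∈ Finset.univ.filter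
      (fun r => q r < OPT - (2 * Δ / ε) * Real.log (N / β)),
      Real.exp (ε * q r / (2 * Δ)) ≤ (β / N) * Real.exp (ε * OPT / (2 * Δ)) := by
    intro r hr
    rw [Finset.mem_filter] at hr
    have hq := hr.2
    have h1 : ε * q r / (2 * Δ) ≤ ε * OPT / (2 * Δ) - Real.log (N / β) := by
      have := mul_lt_mul_of_pos_left hq (show (0:ℝ) < ε / (2 * Δ) by positivity)
      have heq : ε / (2 * Δ) * (OPT - 2 * Δ / ε * Real.log (N / β))
          = ε * OPT / (2 * Δ) - Real.log (N / β) := by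
        field_simp
      rw [heq] at this
      have heq2 : ε / (2 * Δ) * q r = ε * q r / (2 * Δ) := by ring
      linarith [heq2 ▸ this]
    calc Real.exp (ε * q r / (2 * Δ))
        ≤ Real.exp (ε * OPT / (2 * Δ) - Real.log (N / β)) := Real.exp_le_exp.2 h1
      _ = (β / N) * Real.exp (ε * OPT / (2 * Δ)) := by
          rw [Real.exp_sub, Real.exp_log (by positivity)]
          field_simp
  calc ∑ r ∈ Finset.univ.filter
        (fun r => q r < OPT - (2 * Δ / ε) * Real.log (N / β)),
        Real.exp (ε * q r / (2 * Δ))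
      ≤ (Finset.univ.filter
        (fun r => q r < OPT - (2 * Δ / ε) * Real.log (N / β))).card
          • ((β / N) * Real.exp (ε * OPT / (2 * Δ))) :=
        Finset.sum_le_card_nsmul _ _ _ key
    _ ≤ N * ((β / N) * Real.exp (ε * OPT / (2 * Δ))) := by
        rw [nsmul_eq_mul]
        apply mul_le_mul_of_nonneg_right _ (by positivity)
        have h : (Finset.univ.filter
            (fun r => q r < OPT - (2 * Δ / ε) * Real.log (N / β))).card ≤ N := by
          rw [hN]
          exact (Finset.card_filter_le _ _).trans (le_of_eq Finset.card_univ)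
        exact_mod_cast h
    _ = β * Real.exp (ε * OPT / (2 * Δ)) := by field_simp
    _ ≤ β * ∑ r', Real.exp (ε * q r' / (2 * Δ)) :=
        mul_le_mul_of_nonneg_left hOPTle hβ0.le
end
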